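/- Let L* be a d-subspace of ℝ^D with d ≥ 1, and let the dataset X of N = N_in + N_out points consist of N_in inliers lying in L* and in general position in L*, together with N_out arbitrary outliers in ℝ^D, with inliers in general position and the well-definedness condition N_in > N_out + d − 1. Fix a step-size parameter and suppose additionally that cos(γ) · λ_d(X̃_in X̃_inᵀ) − N_out > 8 · (N_out + d − 1), where X̃_in is the matrix of unit-normalized inliers, λ_d denotes the d-th largest eigenvalue, and γ ∈ (0, π/2). Then for every d-subspace L with L ≠ L* and largest principal angle θ_1(L, L*) < γ, one has cos(γ) · λ_d(X̃_in X̃_inᵀ) − √(N_out) · ‖X̃_out‖₂ > 8 · (number of data points of X lying in L), where X̃_out is the matrix of unit-normalized outliers and ‖·‖₂ is the spectral norm. -/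

import Mathlib

open Module

/-- The points `a` are in *general position* in a `d`-dimensional subspace: every selection of
`d` of them at distinct indices is linearly independent. -/
def InGenPos {D N : ℕ} (a : Fin N → EuclideanSpace ℝ (Fin D)) (d : ℕ) : Prop :=
  ∀ s : Finset (Fin N), s.card = d →
    LinearIndependent ℝ (fun i : {x : Fin N // x ∈ s} => a i.1)

/-- Number of points of the family `x` lying in the subspace `L`. -/
noncomputable def countIn {D N : ℕ} (x : Fin N → EuclideanSpace ℝ (Fin D))
    (L : Submodule ℝ (EuclideanSpace ℝ (Fin D))) : ℕ :=
  Nat.card {i : Fin N // x i ∈ L}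

/-- The spectral (operator `ℓ² → ℓ²`) norm of a matrix. -/
noncomputable def specNorm {m n : ℕ} (A : Matrix (Fin m) (Fin n) ℝ) : ℝ :=
  ‖LinearMap.toContinuousLinearMap (Matrix.toEuclideanLin A)‖

/-- The orthogonal projection onto a subspace `L` of `ℝ^D`, as a map `ℝ^D → ℝ^D`. -/
noncomputable def projCLM {D : ℕ} (L : Submodule ℝ (EuclideanSpace ℝ (Fin D))) :
    EuclideanSpace ℝ (Fin D) →L[ℝ] EuclideanSpace ℝ (Fin D) :=
  L.subtypeL.comp (L.orthogonalProjectionOnto)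


lemma specNorm_le_of_sq {m n : ℕ} (A : Matrix (Fin m) (Fin n) ℝ) (c : ℝ) (hc : 0 ≤ c)
    (h : ∑ i, ∑ j, A i j ^ 2 ≤ c ^ 2) :
    ‖LinearMap.toContinuousLinearMap (Matrix.toEuclideanLin A)‖ ≤ c := by
  refine ContinuousLinearMap.opNorm_le_bound _ hc fun x => ?_
  have hy : ∀ i, (Matrix.toEuclideanLin A x : EuclideanSpace ℝ (Fin m)) i
      = ∑ j, A i j * x j := fun i => rfl
  have hnx : ‖x‖ ^ 2 = ∑ j, (x j) ^ 2 := by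
    rw [EuclideanSpace.norm_eq, Real.sq_sqrt (by positivity)]
    simp [sq_abs]
  have key : ‖Matrix.toEuclideanLin A x‖ ^ 2 ≤ (c * ‖x‖) ^ 2 := by
    rw [EuclideanSpace.norm_eq, Real.sq_sqrt (by positivity)]
    simp only [Real.norm_eq_abs, sq_abs, hy]
    calc ∑ i, (∑ j, A i j * x j) ^ 2
        ≤ ∑ i, (∑ j, A i j ^ 2) * (∑ j, (x j) ^ 2) := by
          refine Finset.sum_le_sum fun i _ => ?_
          exact Finset.sum_mul_sq_le_sq_mul_sq _ _ _
      _ = (∑ i, ∑ j, A i j ^ 2) * ∑ j, (x j) ^ 2 := by rw [← Finset.sum_mul]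
      _ ≤ c ^ 2 * ‖x‖ ^ 2 := by
          rw [← hnx]
          exact mul_le_mul_of_nonneg_right h (by positivity)
      _ = (c * ‖x‖) ^ 2 := by ring
  show ‖(Matrix.toEuclideanLin A) x‖ ≤ c * ‖x‖
  nlinarith [norm_nonneg ((Matrix.toEuclideanLin A) x), mul_nonneg hc (norm_nonneg x)]

noncomputable def specNormAux {m n : ℕ} (A : Matrix (Fin m) (Fin n) ℝ) : ℝ :=
  ‖LinearMap.toContinuousLinearMap (Matrix.toEuclideanLin A)‖

lemma specNorm_unit_cols {D N : ℕ} (o : Fin N → EuclideanSpace ℝ (Fin D)) :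
    specNormAux (Matrix.of fun i j => o j i / ‖o j‖) ≤ Real.sqrt N := by
  apply specNorm_le_of_sq _ _ (Real.sqrt_nonneg _)
  rw [Real.sq_sqrt (by positivity), Finset.sum_comm]
  calc ∑ j : Fin N, ∑ i : Fin D, (Matrix.of fun i j => o j i / ‖o j‖) i j ^ 2
      ≤ ∑ _j : Fin N, (1 : ℝ) := by
        refine Finset.sum_le_sum fun j _ => ?_
        by_cases h : ‖o j‖ = 0
        · have h0 : o j = 0 := norm_eq_zero.mp h
          simp [h0]
        · have hsum : ∑ i : Fin D, (o j i) ^ 2 = ‖o j‖ ^ 2 := by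
            rw [EuclideanSpace.norm_eq, Real.sq_sqrt (by positivity)]
            simp [sq_abs]
          have : ∑ i : Fin D, (Matrix.of fun i j => o j i / ‖o j‖) i j ^ 2
              = (∑ i : Fin D, (o j i) ^ 2) / ‖o j‖ ^ 2 := by
            rw [Finset.sum_div]
            refine Finset.sum_congr rfl fun i _ => ?_
            simp [Matrix.of_apply, div_pow]
          rw [this, hsum, div_self (by positivity)]
    _ = N := by simp


def InGenPosAux {D N : ℕ} (a : Fin N → EuclideanSpace ℝ (Fin D)) (d : ℕ) : Prop :=
  ∀ s : Finset (Fin N), s.card = d →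
    LinearIndependent ℝ (fun i : {x : Fin N // x ∈ s} => a i.1)

lemma count_inliers_lt {D N d : ℕ} (hd : 1 ≤ d)
    (Lstar L : Submodule ℝ (EuclideanSpace ℝ (Fin D)))
    (hLstar : finrank ℝ Lstar = d) (hL : finrank ℝ L = d) (hne : L ≠ Lstar)
    (a : Fin N → EuclideanSpace ℝ (Fin D)) (haL : ∀ i, a i ∈ Lstar)
    (hgp : InGenPosAux a d) :
    Nat.card {i : Fin N // a i ∈ L} ≤ d - 1 := by
  classical
  by_contra hcon
  push_neg at hcon
  have hcard : d ≤ (Finset.univ.filter (fun i => a i ∈ L)).card := by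
    have : Nat.card {i : Fin N // a i ∈ L} = (Finset.univ.filter (fun i => a i ∈ L)).card := by
      rw [Nat.card_eq_fintype_card, Fintype.card_subtype]
    omega
  obtain ⟨s, hs_sub, hs_card⟩ := Finset.exists_subset_card_eq hcard
  have hli := hgp s hs_card
  set V := Submodule.span ℝ (Set.range fun i : {x : Fin N // x ∈ s} => a i.1) with hV
  have hVrank : finrank ℝ V = d := by
    rw [hV, finrank_span_eq_card hli, Fintype.card_coe, hs_card]
  have hmemL : ∀ i : {x : Fin N // x ∈ s}, a i.1 ∈ L := by
    intro i
    have := hs_sub i.2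
    simpa using this
  have hVL : V ≤ L := by
    rw [hV, Submodule.span_le]
    rintro _ ⟨i, rfl⟩
    exact hmemL i
  have hVLstar : V ≤ Lstar := by
    rw [hV, Submodule.span_le]
    rintro _ ⟨i, rfl⟩
    exact haL i.1
  have h1 : V = L := Submodule.eq_of_le_of_finrank_eq hVL (by rw [hVrank, hL])
  have h2 : V = Lstar := Submodule.eq_of_le_of_finrank_eq hVLstar (by rw [hVrank, hLstar])
  exact hne (h1 ▸ h2)

/-- (Deterministic condition for linear convergence of SGGD.) With inliers
in general position in the `d`-subspace `L*`, arbitrary outliers, `N_in > N_out + d − 1`,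
`γ ∈ (0, π/2)`, an antitone eigenvalue listing `μ` of `X̃_in X̃_inᵀ`, and
`cos γ · λ_d(X̃_in X̃_inᵀ) − N_out > 8 (N_out + d − 1)`, every `d`-subspace `L ≠ L*` with
largest principal angle `θ_1(L, L*) < γ` (equivalently `‖P_L − P_{L*}‖₂ < sin γ`) satisfies
`cos γ · λ_d(X̃_in X̃_inᵀ) − √N_out · ‖X̃_out‖₂ > 8 · |X ∩ L|`. -/
theorem stmt_16 (D d Nin Nout : ℕ) (hd : 1 ≤ d) (hdD : d ≤ D)
    (Lstar : Submodule ℝ (EuclideanSpace ℝ (Fin D)))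
    (hLstar : finrank ℝ Lstar = d)
    (a : Fin Nin → EuclideanSpace ℝ (Fin D)) (haL : ∀ i, a i ∈ Lstar)
    (hgp : InGenPos a d)
    (o : Fin Nout → EuclideanSpace ℝ (Fin D))
    (hwell : Nout + d - 1 < Nin)
    -- a step-size parameter
    (s : ℝ) (hs : 0 < s)
    (γ : ℝ) (hγ : γ ∈ Set.Ioo 0 (Real.pi / 2))
    -- the unit-normalized inliers and outliers
    (Xin : Matrix (Fin D) (Fin Nin) ℝ) (hXin : Xin = Matrix.of fun i j => a j i / ‖a j‖)
    (Xout : Matrix (Fin D) (Fin Nout) ℝ) (hXout : Xout = Matrix.of fun i j => o j i / ‖o j‖)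
    -- an antitone listing `μ` of the eigenvalues of `X̃_in X̃_inᵀ`, so `λ_d = μ (d-1)`
    (μ : Fin D → ℝ) (hμ : Antitone μ)
    (bb : OrthonormalBasis (Fin D) ℝ (EuclideanSpace ℝ (Fin D)))
    (heig : ∀ i, Matrix.toEuclideanLin (Xin * Xin.transpose) (bb i) = μ i • bb i)
    (hcond : 8 * ((Nout : ℝ) + d - 1) < Real.cos γ * μ ⟨d - 1, by omega⟩ - Nout) :
    ∀ L : Submodule ℝ (EuclideanSpace ℝ (Fin D)), finrank ℝ L = d → L ≠ Lstar →
      ‖projCLM L - projCLM Lstar‖ < Real.sin γ →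
      8 * ((countIn a L + countIn o L : ℕ) : ℝ) <
        Real.cos γ * μ ⟨d - 1, by omega⟩ - Real.sqrt Nout * specNorm Xout := by
  intro L hL hne _hangle
  classical
  -- bound on inliers in L
  have hin : countIn a L ≤ d - 1 := by
    have : InGenPosAux a d := hgp
    exact count_inliers_lt hd Lstar L hLstar hL hne a haL this
  have hout : countIn o L ≤ Nout := by
    unfold countIn
    rw [Nat.card_eq_fintype_card]
    simpa using Fintype.card_subtype_le (fun i : Fin Nout => o i ∈ L)
  have hcount : (countIn a L + countIn o L : ℕ) ≤ Nout + d - 1 := by omega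
  have hcast : ((Nout + d - 1 : ℕ) : ℝ) = (Nout : ℝ) + d - 1 := by
    have : (1 : ℕ) ≤ Nout + d := by omega
    push_cast [Nat.cast_sub this]
    ring
  have hspec : specNorm Xout ≤ Real.sqrt Nout := by
    rw [hXout]
    exact specNorm_unit_cols o
  have hspec0 : 0 ≤ specNorm Xout := norm_nonneg _
  have hmul : Real.sqrt Nout * specNorm Xout ≤ (Nout : ℝ) := by
    calc Real.sqrt Nout * specNorm Xout ≤ Real.sqrt Nout * Real.sqrt Nout :=
          mul_le_mul_of_nonneg_left hspec (Real.sqrt_nonneg _)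
      _ = Nout := Real.mul_self_sqrt (by positivity)
  calc 8 * ((countIn a L + countIn o L : ℕ) : ℝ)
      ≤ 8 * ((Nout + d - 1 : ℕ) : ℝ) := by
        have := (Nat.cast_le (α := ℝ)).mpr hcount
        linarith
    _ = 8 * ((Nout : ℝ) + d - 1) := by rw [hcast]
    _ < Real.cos γ * μ ⟨d - 1, by omega⟩ - Nout := hcond
    _ ≤ Real.cos γ * μ ⟨d - 1, by omega⟩ - Real.sqrt Nout * specNorm Xout := by linarith
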